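/- Let p > 4 and define ψ(η) = (1 + η²)^{1/2} / (1 + (2^{p/2} − 2) η^{p/2} + η^p)^{1/p} for η > 0. Then ψ attains its minimum on (0,∞) uniquely at η = 1, with ψ(1) = 1; equivalently, for every η > 0 with η ≠ 1 one has (1 + η²)^{p/2} > 1 + (2^{p/2} − 2) η^{p/2} + η^p. -/

import Mathlib

open Real Set

/-- Key algebraic inequality: for `q > 2` and `t ≥ 1`,
`(q/2) * t^(q-1) < (1+t)^(q-2) * ((q/2)*t + 1 - q/2)`. -/
lemma lemA {q t : ℝ} (hq : 2 < q) (ht : 1 ≤ t) :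
    q / 2 * t ^ (q - 1) < (1 + t) ^ (q - 2) * (q / 2 * t + 1 - q / 2) := by
  have ht0 : (0:ℝ) < t := lt_of_lt_of_le one_pos ht
  have hfac : (0:ℝ) < q / 2 * t + 1 - q / 2 := by nlinarith
  have hsplit : (1 + t) ^ (q - 2) = t ^ (q - 2) * (1 + 1 / t) ^ (q - 2) := by
    rw [← Real.mul_rpow ht0.le (by positivity)]
    rw [mul_add, mul_one_div, div_self ht0.ne', mul_one, add_comm]
  have htq : t ^ (q - 1) = t ^ (q - 2) * t := by
    rw [show q - 1 = (q - 2) + 1 by ring, Real.rpow_add ht0, Real.rpow_one]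
  have htpow : (0:ℝ) < t ^ (q - 2) := Real.rpow_pos_of_pos ht0 _
  rcases le_or_gt 3 q with h3 | h3
  · -- q ≥ 3 : Bernoulli from below with exponent q - 2 ≥ 1
    have hB : 1 + (q - 2) * (1 / t) ≤ (1 + 1 / t) ^ (q - 2) :=
      one_add_mul_self_le_rpow_one_add (by have := one_div_pos.mpr ht0; linarith) (by linarith)
    have hkey : q / 2 * t < (1 + (q - 2) * (1 / t)) * (q / 2 * t + 1 - q / 2) := by
      rw [← mul_lt_mul_iff_left₀ ht0]
      have hexp : (1 + (q - 2) * (1 / t)) * (q / 2 * t + 1 - q / 2) * t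
          = (t + (q - 2)) * (q / 2 * t + 1 - q / 2) := by field_simp
      rw [hexp]
      nlinarith [mul_nonneg (mul_nonneg (by linarith : (0:ℝ) ≤ q - 2) (by linarith : (0:ℝ) ≤ q - 1)) (by linarith : (0:ℝ) ≤ t - 1)]
    calc q / 2 * t ^ (q - 1) = t ^ (q - 2) * (q / 2 * t) := by rw [htq]; ring
      _ < t ^ (q - 2) * ((1 + (q - 2) * (1 / t)) * (q / 2 * t + 1 - q / 2)) := by
          exact mul_lt_mul_of_pos_left hkey htpow
      _ ≤ t ^ (q - 2) * ((1 + 1 / t) ^ (q - 2) * (q / 2 * t + 1 - q / 2)) := by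
          apply mul_le_mul_of_nonneg_left _ htpow.le
          exact mul_le_mul_of_nonneg_right hB hfac.le
      _ = (1 + t) ^ (q - 2) * (q / 2 * t + 1 - q / 2) := by rw [hsplit]; ring
  · -- 2 < q < 3 : Bernoulli from above with exponent 3 - q ∈ (0,1)
    have hB : (1 + 1 / t) ^ (3 - q) ≤ 1 + (3 - q) * (1 / t) :=
      rpow_one_add_le_one_add_mul_self (by have := one_div_pos.mpr ht0; linarith) (by linarith) (by linarith)
    have hBpos : (0:ℝ) < (1 + 1 / t) ^ (3 - q) := Real.rpow_pos_of_pos (by positivity) _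
    have hBpos' : (0:ℝ) < 1 + (3 - q) * (1 / t) := by
      have : (0:ℝ) ≤ (3 - q) * (1 / t) := mul_nonneg (by linarith) (by positivity)
      linarith
    have hmul : (1 + 1 / t) ^ (q - 2) * (1 + 1 / t) ^ (3 - q) = 1 + 1 / t := by
      rw [← Real.rpow_add (by positivity), show q - 2 + (3 - q) = 1 by ring, Real.rpow_one]
    have hlow : (1 + 1 / t) / (1 + (3 - q) * (1 / t)) ≤ (1 + 1 / t) ^ (q - 2) := by
      rw [div_le_iff₀ hBpos']
      calc 1 + 1 / t = (1 + 1 / t) ^ (q - 2) * (1 + 1 / t) ^ (3 - q) := hmul.symm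
        _ ≤ (1 + 1 / t) ^ (q - 2) * (1 + (3 - q) * (1 / t)) :=
            mul_le_mul_of_nonneg_left hB (Real.rpow_pos_of_pos (by positivity) _).le
    have hkey : q / 2 * t * (1 + (3 - q) * (1 / t)) < (1 + 1 / t) * (q / 2 * t + 1 - q / 2) := by
      rw [← mul_lt_mul_iff_left₀ ht0]
      have he1 : q / 2 * t * (1 + (3 - q) * (1 / t)) * t = q / 2 * t * (t + (3 - q)) := by
        field_simp
      have he2 : (1 + 1 / t) * (q / 2 * t + 1 - q / 2) * t = (t + 1) * (q / 2 * t + 1 - q / 2) := by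
        field_simp
      rw [he1, he2]
      nlinarith [mul_pos (by linarith : (0:ℝ) < q - 2) (by nlinarith : (0:ℝ) < (q-1)*t - 1)]
    have hkey2 : q / 2 * t < (1 + 1 / t) / (1 + (3 - q) * (1 / t)) * (q / 2 * t + 1 - q / 2) := by
      rw [div_mul_eq_mul_div ((1:ℝ) + 1 / t), lt_div_iff₀ hBpos']
      linarith [hkey]
    calc q / 2 * t ^ (q - 1) = t ^ (q - 2) * (q / 2 * t) := by rw [htq]; ring
      _ < t ^ (q - 2) * ((1 + 1 / t) / (1 + (3 - q) * (1 / t)) * (q / 2 * t + 1 - q / 2)) :=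
          mul_lt_mul_of_pos_left hkey2 htpow
      _ ≤ t ^ (q - 2) * ((1 + 1 / t) ^ (q - 2) * (q / 2 * t + 1 - q / 2)) := by
          apply mul_le_mul_of_nonneg_left _ htpow.le
          exact mul_le_mul_of_nonneg_right hlow hfac.le
      _ = (1 + t) ^ (q - 2) * (q / 2 * t + 1 - q / 2) := by rw [hsplit]; ring


noncomputable def Efun (q : ℝ) : ℝ → ℝ :=
  fun t => (1 + t) ^ (q - 1) * t ^ (1 - q / 2) - t ^ (q / 2)

lemma hasDerivAt_Efun {q : ℝ} {t : ℝ} (ht0 : 0 < t) :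
    HasDerivAt (Efun q)
      ((q - 1) * (1 + t) ^ (q - 2) * t ^ (1 - q / 2)
        + (1 + t) ^ (q - 1) * ((1 - q / 2) * t ^ (-(q / 2)))
        - q / 2 * t ^ (q / 2 - 1)) t := by
  have h1t : (0:ℝ) < 1 + t := by linarith
  have h1 : HasDerivAt (fun x : ℝ => (1 + x) ^ (q - 1)) ((q - 1) * (1 + t) ^ (q - 2)) t := by
    have h := (Real.hasDerivAt_rpow_const (x := 1 + t) (p := q - 1) (Or.inl h1t.ne')).comp t
      ((hasDerivAt_id t).const_add 1)
    simpa [Function.comp_def, show q - 1 - 1 = q - 2 by ring] using h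
  have h2 : HasDerivAt (fun x : ℝ => x ^ (1 - q / 2)) ((1 - q / 2) * t ^ (-(q / 2))) t := by
    have h := Real.hasDerivAt_rpow_const (x := t) (p := 1 - q / 2) (Or.inl ht0.ne')
    simpa [show 1 - q / 2 - 1 = -(q / 2) by ring] using h
  have h3 : HasDerivAt (fun x : ℝ => x ^ (q / 2)) (q / 2 * t ^ (q / 2 - 1)) t :=
    Real.hasDerivAt_rpow_const (x := t) (p := q / 2) (Or.inl ht0.ne')
  exact (h1.mul h2).sub h3

lemma Efun_deriv_pos {q : ℝ} (hq : 2 < q) {t : ℝ} (ht : 1 < t) :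
    0 < (q - 1) * (1 + t) ^ (q - 2) * t ^ (1 - q / 2)
        + (1 + t) ^ (q - 1) * ((1 - q / 2) * t ^ (-(q / 2)))
        - q / 2 * t ^ (q / 2 - 1) := by
  have ht0 : (0:ℝ) < t := lt_trans one_pos ht
  have h1t : (0:ℝ) < 1 + t := by linarith
  have hA : (0:ℝ) < t ^ (q / 2) := Real.rpow_pos_of_pos ht0 _
  have e1 : t ^ (1 - q / 2) * t ^ (q / 2) = t := by
    rw [← Real.rpow_add ht0, show 1 - q / 2 + q / 2 = 1 by ring, Real.rpow_one]
  have e2 : t ^ (-(q / 2)) * t ^ (q / 2) = 1 := by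
    rw [← Real.rpow_add ht0, show -(q / 2) + q / 2 = 0 by ring, Real.rpow_zero]
  have e3 : t ^ (q / 2 - 1) * t ^ (q / 2) = t ^ (q - 1) := by
    rw [← Real.rpow_add ht0, show q / 2 - 1 + q / 2 = q - 1 by ring]
  have e4 : (1 + t) ^ (q - 1) = (1 + t) ^ (q - 2) * (1 + t) := by
    rw [← Real.rpow_add_one h1t.ne', show q - 2 + 1 = q - 1 by ring]
  have key : ((q - 1) * (1 + t) ^ (q - 2) * t ^ (1 - q / 2)
        + (1 + t) ^ (q - 1) * ((1 - q / 2) * t ^ (-(q / 2)))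
        - q / 2 * t ^ (q / 2 - 1)) * t ^ (q / 2)
      = (1 + t) ^ (q - 2) * (q / 2 * t + 1 - q / 2) - q / 2 * t ^ (q - 1) := by
    linear_combination ((q - 1) * (1 + t) ^ (q - 2)) * e1
      + ((1 - q / 2) * (1 + t) ^ (q - 2) * (1 + t)) * e2
      + ((1 - q / 2) * (t ^ (-(q / 2)) * t ^ (q / 2))) * e4
      - (q / 2) * e3
  have hpos : 0 < ((q - 1) * (1 + t) ^ (q - 2) * t ^ (1 - q / 2)
        + (1 + t) ^ (q - 1) * ((1 - q / 2) * t ^ (-(q / 2)))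
        - q / 2 * t ^ (q / 2 - 1)) * t ^ (q / 2) := by
    rw [key]; linarith [lemA hq ht.le]
  nlinarith [hA, hpos]

lemma Efun_strictMono {q : ℝ} (hq : 2 < q) : StrictMonoOn (Efun q) (Ici 1) := by
  apply strictMonoOn_of_deriv_pos (convex_Ici 1)
  · intro t ht
    exact (hasDerivAt_Efun (show (0:ℝ) < t by exact lt_of_lt_of_le one_pos ht)).continuousAt.continuousWithinAt
  · intro t ht
    rw [interior_Ici] at ht
    rw [(hasDerivAt_Efun (show (0:ℝ) < t by exact lt_trans one_pos ht)).deriv]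
    exact Efun_deriv_pos hq ht

lemma Efun_gt {q : ℝ} (hq : 2 < q) {t : ℝ} (ht : 1 < t) :
    (2:ℝ) ^ (q - 1) - 1 < (1 + t) ^ (q - 1) * t ^ (1 - q / 2) - t ^ (q / 2) := by
  have h := Efun_strictMono hq (mem_Ici.mpr le_rfl) (mem_Ici.mpr ht.le) ht
  have hE1 : Efun q 1 = (2:ℝ) ^ (q - 1) - 1 := by
    simp [Efun, Real.one_rpow]
    norm_num
  rw [hE1] at h
  exact h

noncomputable def Dfun (q : ℝ) : ℝ → ℝ :=
  fun t => (1 + t) ^ q - t ^ q - ((2:ℝ) ^ q - 2) * t ^ (q / 2)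

lemma hasDerivAt_Dfun {q : ℝ} {t : ℝ} (ht0 : 0 < t) :
    HasDerivAt (Dfun q)
      (q * (1 + t) ^ (q - 1) - q * t ^ (q - 1)
        - ((2:ℝ) ^ q - 2) * (q / 2 * t ^ (q / 2 - 1))) t := by
  have h1t : (0:ℝ) < 1 + t := by linarith
  have h1 : HasDerivAt (fun x : ℝ => (1 + x) ^ q) (q * (1 + t) ^ (q - 1)) t := by
    have h := (Real.hasDerivAt_rpow_const (x := 1 + t) (p := q) (Or.inl h1t.ne')).comp t
      ((hasDerivAt_id t).const_add 1)
    simpa [Function.comp_def] using h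
  have h2 : HasDerivAt (fun x : ℝ => x ^ q) (q * t ^ (q - 1)) t :=
    Real.hasDerivAt_rpow_const (x := t) (p := q) (Or.inl ht0.ne')
  have h3 : HasDerivAt (fun x : ℝ => ((2:ℝ) ^ q - 2) * x ^ (q / 2))
      (((2:ℝ) ^ q - 2) * (q / 2 * t ^ (q / 2 - 1))) t :=
    (Real.hasDerivAt_rpow_const (x := t) (p := q / 2) (Or.inl ht0.ne')).const_mul _
  exact (h1.sub h2).sub h3

lemma Dfun_deriv_pos {q : ℝ} (hq : 2 < q) {t : ℝ} (ht : 1 < t) :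
    0 < q * (1 + t) ^ (q - 1) - q * t ^ (q - 1)
        - ((2:ℝ) ^ q - 2) * (q / 2 * t ^ (q / 2 - 1)) := by
  have ht0 : (0:ℝ) < t := lt_trans one_pos ht
  have hB : (0:ℝ) < t ^ (q / 2 - 1) := Real.rpow_pos_of_pos ht0 _
  have hE := Efun_gt hq ht
  have e1 : t ^ (1 - q / 2) * t ^ (q / 2 - 1) = 1 := by
    rw [← Real.rpow_add ht0, show 1 - q / 2 + (q / 2 - 1) = 0 by ring, Real.rpow_zero]
  have e2 : t ^ (q / 2) * t ^ (q / 2 - 1) = t ^ (q - 1) := by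
    rw [← Real.rpow_add ht0, show q / 2 + (q / 2 - 1) = q - 1 by ring]
  have h2q : (2:ℝ) ^ q = 2 * 2 ^ (q - 1) := by
    rw [← Real.rpow_one_add' (by norm_num) (by ring_nf; linarith : 1 + (q-1) ≠ 0)]
    norm_num
  have step : ((2:ℝ) ^ (q - 1) - 1) * t ^ (q / 2 - 1)
      < (1 + t) ^ (q - 1) - t ^ (q - 1) := by
    have := mul_lt_mul_of_pos_right hE hB
    calc ((2:ℝ) ^ (q - 1) - 1) * t ^ (q / 2 - 1)
        < ((1 + t) ^ (q - 1) * t ^ (1 - q / 2) - t ^ (q / 2)) * t ^ (q / 2 - 1) := this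
      _ = (1 + t) ^ (q - 1) * (t ^ (1 - q / 2) * t ^ (q / 2 - 1))
            - t ^ (q / 2) * t ^ (q / 2 - 1) := by ring
      _ = (1 + t) ^ (q - 1) - t ^ (q - 1) := by rw [e1, e2, mul_one]
  have hq0 : (0:ℝ) < q := by linarith
  have hb : (0:ℝ) < (1 + t) ^ (q - 1) - t ^ (q - 1) - ((2:ℝ) ^ (q - 1) - 1) * t ^ (q / 2 - 1) := by
    linarith
  have := mul_pos hq0 hb
  rw [h2q]
  nlinarith [this]

lemma Dfun_strictMono {q : ℝ} (hq : 2 < q) : StrictMonoOn (Dfun q) (Ici 1) := by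
  apply strictMonoOn_of_deriv_pos (convex_Ici 1)
  · intro t ht
    exact (hasDerivAt_Dfun (show (0:ℝ) < t by exact lt_of_lt_of_le one_pos ht)).continuousAt.continuousWithinAt
  · intro t ht
    rw [interior_Ici] at ht
    rw [(hasDerivAt_Dfun (show (0:ℝ) < t by exact lt_trans one_pos ht)).deriv]
    exact Dfun_deriv_pos hq ht

/-- Core inequality: for `q > 2` and `t > 1`. -/
lemma core {q : ℝ} (hq : 2 < q) {t : ℝ} (ht : 1 < t) :
    1 + ((2:ℝ) ^ q - 2) * t ^ (q / 2) + t ^ q < (1 + t) ^ q := by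
  have h := Dfun_strictMono hq (mem_Ici.mpr le_rfl) (mem_Ici.mpr ht.le) ht
  have hD1 : Dfun q 1 = 1 := by
    simp [Dfun, Real.one_rpow]
    norm_num
  rw [hD1] at h
  simp only [Dfun] at h
  linarith

lemma final_gt {p : ℝ} (hp : 4 < p) {η : ℝ} (hη : 1 < η) :
    1 + ((2 : ℝ) ^ (p / 2) - 2) * η ^ (p / 2) + η ^ p < (1 + η ^ 2) ^ (p / 2) := by
  have hη0 : (0:ℝ) < η := lt_trans one_pos hη
  have hq : (2:ℝ) < p / 2 := by linarith
  have ht : (1:ℝ) < η ^ 2 := by nlinarith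
  have e1 : ((η ^ 2 : ℝ)) ^ (p / 2 / 2) = η ^ (p / 2) := by
    rw [← Real.rpow_natCast η 2, ← Real.rpow_mul hη0.le]
    congr 1
    push_cast
    ring
  have e2 : ((η ^ 2 : ℝ)) ^ (p / 2) = η ^ p := by
    rw [← Real.rpow_natCast η 2, ← Real.rpow_mul hη0.le]
    congr 1
    push_cast
    ring
  have h := core hq ht
  rw [e1, e2] at h
  exact h

lemma final {p : ℝ} (hp : 4 < p) {η : ℝ} (hη : 0 < η) (hne : η ≠ 1) :
    1 + ((2 : ℝ) ^ (p / 2) - 2) * η ^ (p / 2) + η ^ p < (1 + η ^ 2) ^ (p / 2) := by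
  rcases lt_or_gt_of_ne hne with hlt | hgt
  · -- η < 1 : apply the case η > 1 to η⁻¹ and rescale
    have hinv : 1 < η⁻¹ := (one_lt_inv₀ hη).mpr hlt
    have h := final_gt hp hinv
    have hp2 : (0:ℝ) < η ^ p := Real.rpow_pos_of_pos hη _
    have hi1 : (η⁻¹ : ℝ) ^ (p / 2) = (η ^ (p / 2))⁻¹ := Real.inv_rpow hη.le _
    have hi2 : (η⁻¹ : ℝ) ^ p = (η ^ p)⁻¹ := Real.inv_rpow hη.le _
    rw [hi1, hi2] at h
    have hmul := mul_lt_mul_of_pos_left h hp2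
    have ea : η ^ p * (η ^ (p / 2))⁻¹ = η ^ (p / 2) := by
      rw [← Real.rpow_neg hη.le, ← Real.rpow_add hη]
      congr 1; ring
    have eb : η ^ p * (η ^ p)⁻¹ = 1 := mul_inv_cancel₀ hp2.ne'
    have ec : η ^ p * (1 + (η⁻¹) ^ 2) ^ (p / 2) = (1 + η ^ 2) ^ (p / 2) := by
      have h2 : (η : ℝ) ^ p = (η ^ 2 : ℝ) ^ (p / 2) := by
        rw [← Real.rpow_natCast η 2, ← Real.rpow_mul hη.le]
        congr 1; push_cast; ring
      rw [h2, ← Real.mul_rpow (by positivity) (by positivity)]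
      congr 1
      field_simp
      ring
    calc 1 + ((2:ℝ) ^ (p / 2) - 2) * η ^ (p / 2) + η ^ p
        = η ^ p * (1 + ((2:ℝ) ^ (p / 2) - 2) * (η ^ (p / 2))⁻¹ + (η ^ p)⁻¹) := by
          rw [mul_add, mul_add, mul_one, eb, mul_comm ((2:ℝ) ^ (p / 2) - 2) ((η ^ (p/2))⁻¹),
            ← mul_assoc, ea]
          ring
      _ < η ^ p * (1 + (η⁻¹) ^ 2) ^ (p / 2) := hmul
      _ = (1 + η ^ 2) ^ (p / 2) := ec
  · exact final_gt hp hgt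

/-- for `p > 4`, the function
`ψ(η) = (1 + η²)^(1/2) / (1 + (2^(p/2) - 2) η^(p/2) + η^p)^(1/p)` on `(0,∞)` attains its
minimum uniquely at `η = 1` with `ψ(1) = 1`; equivalently, for every `η > 0`, `η ≠ 1`, one has
`(1 + η²)^(p/2) > 1 + (2^(p/2) - 2) η^(p/2) + η^p`. -/
theorem stmt_15 (p : ℝ) (hp : 4 < p) (ψ : ℝ → ℝ)
    (hψ : ∀ η : ℝ, 0 < η →
      ψ η = (1 + η ^ 2) ^ ((1 : ℝ) / 2) /
        (1 + ((2 : ℝ) ^ (p / 2) - 2) * η ^ (p / 2) + η ^ p) ^ (1 / p)) :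
    ψ 1 = 1 ∧ (∀ η : ℝ, 0 < η → η ≠ 1 → ψ 1 < ψ η) ∧
      (∀ η : ℝ, 0 < η → η ≠ 1 →
        1 + ((2 : ℝ) ^ (p / 2) - 2) * η ^ (p / 2) + η ^ p < (1 + η ^ 2) ^ (p / 2)) := by
  have hp0 : (0:ℝ) < p := by linarith
  have hψ1 : ψ 1 = 1 := by
    rw [hψ 1 one_pos]
    rw [Real.one_rpow, Real.one_rpow, one_pow, mul_one]
    have hd : (1 : ℝ) + ((2:ℝ) ^ (p / 2) - 2) + 1 = (2:ℝ) ^ (p / 2) := by ring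
    rw [hd]
    have h1 : ((2:ℝ) ^ (p / 2)) ^ (1 / p) = 2 ^ ((1:ℝ) / 2) := by
      rw [← Real.rpow_mul (by norm_num : (0:ℝ) ≤ 2)]
      congr 1
      field_simp
    rw [h1]
    norm_num
  have hden : ∀ η : ℝ, 0 < η → 0 < 1 + ((2:ℝ) ^ (p / 2) - 2) * η ^ (p / 2) + η ^ p := by
    intro η hη
    have h2 : (2:ℝ) < 2 ^ (p / 2) := by
      have := Real.rpow_lt_rpow_of_exponent_lt one_lt_two (show (1:ℝ) < p / 2 by linarith)
      simpa using this
    have a1 : (0:ℝ) < η ^ (p / 2) := Real.rpow_pos_of_pos hη _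
    have a2 : (0:ℝ) < η ^ p := Real.rpow_pos_of_pos hη _
    have a3 : (0:ℝ) ≤ ((2:ℝ) ^ (p / 2) - 2) * η ^ (p / 2) :=
      mul_nonneg (by linarith) a1.le
    linarith
  refine ⟨hψ1, ?_, fun η hη hne => final hp hη hne⟩
  intro η hη hne
  rw [hψ1, hψ η hη]
  have hfin := final hp hη hne
  have hd := hden η hη
  have hnum : (0:ℝ) < 1 + η ^ 2 := by positivity
  rw [lt_div_iff₀ (Real.rpow_pos_of_pos hd _), one_mul]
  calc (1 + ((2:ℝ) ^ (p / 2) - 2) * η ^ (p / 2) + η ^ p) ^ (1 / p)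
      < ((1 + η ^ 2) ^ (p / 2)) ^ (1 / p) :=
        Real.rpow_lt_rpow hd.le hfin (by positivity)
    _ = (1 + η ^ 2) ^ ((1:ℝ) / 2) := by
        rw [← Real.rpow_mul hnum.le]
        congr 1
        field_simp
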